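/- arXiv:2309.16911 — 2 statements merged into one kernel-verified Lean document; each statement's English description precedes it below -/
import Mathlib

section
/- Let f be monotone, subadditive with f(∅)=0, and let X₁, X₂ ⊆ F. For any s ≥ 1 and any ε > 0 and any real times t₀ ≤ t₁ ≤ ⋯ ≤ t_{2s}, define ALGcost = s(f(X₁)+f(X₂)) + Σ_{k=1}^s [|X₁|(t_{2k−1}−t_{2k−2}) + |X₂|(t_{2k}−t_{2k−1})] − (|X₁|+|X₂|)·s·ε, ODDcost = f(X₁)+f(X₂)+(s−1)f(X₁∪X₂)+Σ_{k=1}^s |X₂|(t_{2k}−t_{2k−1}), EVENcost = s·f(X₁∪X₂)+Σ_{k=1}^s |X₁|(t_{2k−1}−t_{2k−2}). Then, letting ε → 0, ALGcost / ((ODDcost+EVENcost)/2) ≥ 2(f(X₁)+f(X₂)) / (2f(X₁∪X₂) + (f(X₁)+f(X₂)−f(X₁∪X₂))/s), provided f(X₁)+f(X₂) ≤ f(X₁∪X₂)·2 and all quantities are positive. -/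
/-- The adversarial lower-bound computation. With the costs of the
online algorithm and the "odd"/"even" offline schedules defined as in the proof of
Theorem 4, as `ε → 0` the ratio `ALGcost / ((ODDcost + EVENcost)/2)` is at least
`2(f X₁ + f X₂) / (2 f(X₁∪X₂) + (f X₁ + f X₂ − f(X₁∪X₂))/s)`. -/
theorem stmt_13 {F : Type*} [Fintype F] [DecidableEq F]
    (f : Finset F → ℝ)
    (hnn : ∀ X, 0 ≤ f X)
    (h0 : f ∅ = 0)
    (hmono : ∀ X Y : Finset F, Y ⊆ X → f Y ≤ f X)
    (hsub : ∀ X Y : Finset F, f (X ∪ Y) ≤ f X + f Y)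
    (X₁ X₂ : Finset F)
    (s : ℕ) (hs : 1 ≤ s)
    (t : ℕ → ℝ) (ht : Monotone t)
    (hle : f X₁ + f X₂ ≤ 2 * f (X₁ ∪ X₂))
    (hXpos : 0 < f (X₁ ∪ X₂)) :
    let ALGcost : ℝ → ℝ := fun ε =>
      (s : ℝ) * (f X₁ + f X₂) +
        (∑ k ∈ Finset.Icc 1 s,
          ((X₁.card : ℝ) * (t (2 * k - 1) - t (2 * k - 2)) +
           (X₂.card : ℝ) * (t (2 * k) - t (2 * k - 1)))) -
        ((X₁.card : ℝ) + (X₂.card : ℝ)) * (s : ℝ) * ε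
    let ODDcost : ℝ :=
      f X₁ + f X₂ + ((s : ℝ) - 1) * f (X₁ ∪ X₂) +
        ∑ k ∈ Finset.Icc 1 s, (X₂.card : ℝ) * (t (2 * k) - t (2 * k - 1))
    let EVENcost : ℝ :=
      (s : ℝ) * f (X₁ ∪ X₂) +
        ∑ k ∈ Finset.Icc 1 s, (X₁.card : ℝ) * (t (2 * k - 1) - t (2 * k - 2))
    Filter.Tendsto (fun ε => ALGcost ε / ((ODDcost + EVENcost) / 2)) (nhds 0)
        (nhds (ALGcost 0 / ((ODDcost + EVENcost) / 2))) ∧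
    2 * (f X₁ + f X₂) /
        (2 * f (X₁ ∪ X₂) + (f X₁ + f X₂ - f (X₁ ∪ X₂)) / (s : ℝ)) ≤
      ALGcost 0 / ((ODDcost + EVENcost) / 2) := by

  intro ALGcost ODDcost EVENcost
  set A := f X₁ + f X₂ with hA
  set B := f (X₁ ∪ X₂) with hB
  set T := ∑ k ∈ Finset.Icc 1 s,
      ((X₁.card : ℝ) * (t (2 * k - 1) - t (2 * k - 2)) +
       (X₂.card : ℝ) * (t (2 * k) - t (2 * k - 1))) with hT
  have hTnn : 0 ≤ T := by
    apply Finset.sum_nonneg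
    intro k hk
    have h1 : t (2 * k - 2) ≤ t (2 * k - 1) := ht (by omega)
    have h2 : t (2 * k - 1) ≤ t (2 * k) := ht (by omega)
    have c1 : (0:ℝ) ≤ (X₁.card : ℝ) := by positivity
    have c2 : (0:ℝ) ≤ (X₂.card : ℝ) := by positivity
    nlinarith
  have hAnn : 0 ≤ A := add_nonneg (hnn _) (hnn _)
  have hsR : (1:ℝ) ≤ (s:ℝ) := by exact_mod_cast hs
  have hsR0 : (0:ℝ) < (s:ℝ) := by linarith
  have hsum : ODDcost + EVENcost = A + (2 * (s:ℝ) - 1) * B + T := by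
    simp only [ODDcost, EVENcost, hT, Finset.sum_add_distrib]
    ring
  have hALG0 : ALGcost 0 = (s:ℝ) * A + T := by
    simp only [ALGcost, hT]
    ring
  have hD2 : 0 < (ODDcost + EVENcost) / 2 := by
    rw [hsum]; nlinarith
  constructor
  · apply Filter.Tendsto.div_const
    have : Continuous ALGcost := by
      simp only [ALGcost]
      continuity
    exact this.tendsto 0
  · rw [hALG0, hsum]
    have hD1 : 0 < 2 * B + (A - B) / (s:ℝ) := by
      have h1 : -B ≤ (A - B) / (s:ℝ) := by
        rw [le_div_iff₀ hsR0]; nlinarith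
      linarith
    rw [div_le_div_iff₀ hD1 (show (0:ℝ) < (A + (2 * (s:ℝ) - 1) * B + T) / 2 by nlinarith)]
    have key : (s:ℝ) * A ≤ A + (2 * (s:ℝ) - 1) * B := by nlinarith
    have hTkey : T * (A + (2 * (s:ℝ) - 1) * B - (s:ℝ) * A) ≥ 0 := by
      apply mul_nonneg hTnn; linarith
    have hrw : 2 * B + (A - B) / (s:ℝ) = (A + (2 * (s:ℝ) - 1) * B) / (s:ℝ) := by
      field_simp; ring
    rw [hrw, mul_comm ((s:ℝ) * A + T), div_mul_eq_mul_div, le_div_iff₀ hsR0]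
    clear hALG0 hsum hD2 hD1 hrw hT hA hB hle
    clear_value A B T
    nlinarith [hTkey]
end

section
/- Let f be monotone subadditive with f(∅)=0 and curvature Γ > 0. For any sets B̃, L_prev, L with f(B̃ ∪ L_prev) ≤ S (where S ≥ 0), one has f(B̃ ∪ L) ≤ S/Γ + f(L) − f(L_prev). -/
/-- For `f` monotone, subadditive with `f ∅ = 0` and curvature
`Γ > 0`, and any sets `B̃, Lprev, L` with `f (B̃ ∪ Lprev) ≤ S` (`S ≥ 0`), one has
`f (B̃ ∪ L) ≤ S/Γ + f L − f Lprev`. -/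
theorem stmt_18 {F : Type*} [Fintype F] [DecidableEq F]
    (f : Finset F → ℝ)
    (hnn : ∀ X, 0 ≤ f X)
    (h0 : f ∅ = 0)
    (hmono : ∀ X Y : Finset F, Y ⊆ X → f Y ≤ f X)
    (hsub : ∀ X Y : Finset F, f (X ∪ Y) ≤ f X + f Y)
    (Γ : ℝ)
    (hΓdef : Γ = sInf {r : ℝ | ∃ X Y : Finset F, 0 < f X + f Y ∧ r = f (X ∪ Y) / (f X + f Y)})
    (hΓpos : 0 < Γ)
    (B L Lprev : Finset F) (S : ℝ) (hS : 0 ≤ S)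
    (hbound : f (B ∪ Lprev) ≤ S) :
    f (B ∪ L) ≤ S / Γ + f L - f Lprev := by
  have h1 : f (B ∪ L) ≤ f B + f L := hsub B L
  rcases eq_or_lt_of_le (add_nonneg (hnn B) (hnn Lprev)) with h | h
  · have hB : f B = 0 := by nlinarith [hnn B, hnn Lprev]
    have hLp : f Lprev = 0 := by nlinarith [hnn B, hnn Lprev]
    have : 0 ≤ S / Γ := div_nonneg hS hΓpos.le
    linarith
  · have hmem : f (B ∪ Lprev) / (f B + f Lprev) ∈
        {r : ℝ | ∃ X Y : Finset F, 0 < f X + f Y ∧ r = f (X ∪ Y) / (f X + f Y)} :=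
      ⟨B, Lprev, h, rfl⟩
    have hbdd : BddBelow {r : ℝ | ∃ X Y : Finset F, 0 < f X + f Y ∧ r = f (X ∪ Y) / (f X + f Y)} := by
      refine ⟨0, fun r hr => ?_⟩
      obtain ⟨X, Y, hXY, rfl⟩ := hr
      exact div_nonneg (hnn _) hXY.le
    have hΓle : Γ ≤ f (B ∪ Lprev) / (f B + f Lprev) := hΓdef ▸ csInf_le hbdd hmem
    have h2 : Γ * (f B + f Lprev) ≤ f (B ∪ Lprev) := by
      have := (le_div_iff₀ h).mp hΓle
      linarith
    have h3 : f B + f Lprev ≤ S / Γ := by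
      rw [le_div_iff₀ hΓpos]
      nlinarith
    linarith
end
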